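/- Let v : ℝ_+ → ℝ_+ be continuous, differentiable, strictly increasing and strictly concave, and let w : [0,1] → [0,1] be continuous and strictly increasing with w(0) = 0, w(1) = 1, concave on [0, p̃] and convex on [p̃, 1] for some p̃ ∈ [0,1]. Let p* be the smallest probability such that the minimum concave majorant w* of w is affine on [p*, 1], and assume p* ≤ (k−1)/k. Set h(l) := w(l/k) − w((l−1)/k) for l ∈ [k], fix ρ̄ ≥ 0, and let z* be any maximizer of z ↦ Σ_{l=1}^k h(l) v(z(l)) − (ρ̄/k) Σ_{l=1}^k z(l) over { z ∈ ℝ^k : z(1) ≥ z(2) ≥ … ≥ z(k) ≥ 0 }. Then, with l* := min{ l ∈ [k] : (l−1)/k ≥ p* }, the maximizer satisfies z*(l*) = z*(l*+1) = … = z*(k); i.e., the (k − l* + 1) lowest allocations are all equal. -/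

import Mathlib

open Finset

open Set Filter



private lemma st19_slope_between {f : ℝ → ℝ} {x u y : ℝ} (h1 : x < u) (h2 : u < y)
    (hadj : (f y - f u) / (y - u) ≤ (f u - f x) / (u - x)) :
    (f y - f u) / (y - u) ≤ (f y - f x) / (y - x) ∧
      (f y - f x) / (y - x) ≤ (f u - f x) / (u - x) := by
  have hux : (0:ℝ) < u - x := by linarith
  have huy : (0:ℝ) < y - u := by linarith
  have hxy : (0:ℝ) < y - x := by linarith
  rw [div_le_div_iff₀ huy hux] at hadj
  constructor
  · rw [div_le_div_iff₀ huy hxy]; nlinarith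
  · rw [div_le_div_iff₀ hxy hux]; nlinarith

private lemma st19_deriv_le_slope {v v' : ℝ → ℝ}
    (hvd : ∀ x ∈ Set.Ici (0:ℝ), HasDerivWithinAt v (v' x) (Set.Ici 0) x)
    (hcc : ConcaveOn ℝ (Set.Ici 0) v) {x y : ℝ} (hx : 0 ≤ x) (hxy : x < y) :
    (v y - v x) / (y - x) ≤ v' x := by
  have ht := hasDerivWithinAt_iff_tendsto_slope.1 (hvd x hx)
  have hsub : Set.Ioo x y ⊆ Set.Ici 0 \ {x} := by
    intro u hu; exact ⟨le_trans hx hu.1.le, ne_of_gt hu.1⟩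
  have ht' : Tendsto (slope v x) (nhdsWithin x (Set.Ioo x y)) (nhds (v' x)) :=
    ht.mono_left (nhdsWithin_mono _ hsub)
  haveI : (nhdsWithin x (Set.Ioo x y)).NeBot := by
    rw [nhdsWithin_Ioo_eq_nhdsGT hxy]; infer_instance
  refine ge_of_tendsto ht' ?_
  filter_upwards [self_mem_nhdsWithin] with u hu
  have hy0 : (0:ℝ) ≤ y := le_trans hx hxy.le
  have hadj' : (v y - v u) / (y - u) ≤ (v u - v x) / (u - x) :=
    hcc.slope_anti_adjacent hx hy0 hu.1 hu.2
  have := (st19_slope_between hu.1 hu.2 hadj').2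
  rw [slope_def_field]
  exact this

private lemma st19_slope_le_deriv {v v' : ℝ → ℝ}
    (hvd : ∀ x ∈ Set.Ici (0:ℝ), HasDerivWithinAt v (v' x) (Set.Ici 0) x)
    (hcc : ConcaveOn ℝ (Set.Ici 0) v) {x y : ℝ} (hx : 0 ≤ x) (hxy : x < y) :
    v' y ≤ (v y - v x) / (y - x) := by
  have hy : (0:ℝ) ≤ y := le_trans hx hxy.le
  have ht := hasDerivWithinAt_iff_tendsto_slope.1 (hvd y hy)
  have hsub : Set.Ioo x y ⊆ Set.Ici 0 \ {y} := by
    intro u hu; exact ⟨le_trans hx hu.1.le, ne_of_lt hu.2⟩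
  have ht' : Tendsto (slope v y) (nhdsWithin y (Set.Ioo x y)) (nhds (v' y)) :=
    ht.mono_left (nhdsWithin_mono _ hsub)
  haveI : (nhdsWithin y (Set.Ioo x y)).NeBot := by
    rw [nhdsWithin_Ioo_eq_nhdsLT hxy]; infer_instance
  refine le_of_tendsto ht' ?_
  filter_upwards [self_mem_nhdsWithin] with u hu
  have hadj' : (v y - v u) / (y - u) ≤ (v u - v x) / (u - x) :=
    hcc.slope_anti_adjacent hx hy hu.1 hu.2
  have := (st19_slope_between hu.1 hu.2 hadj').1
  rw [slope_comm, slope_def_field]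
  exact this

private lemma st19_deriv_pos {v v' : ℝ → ℝ}
    (hvd : ∀ x ∈ Set.Ici (0:ℝ), HasDerivWithinAt v (v' x) (Set.Ici 0) x)
    (hcc : ConcaveOn ℝ (Set.Ici 0) v) (hvm : StrictMonoOn v (Set.Ici 0))
    {x : ℝ} (hx : 0 ≤ x) : 0 < v' x := by
  have h1 : (v (x+1) - v x) / (x + 1 - x) ≤ v' x :=
    st19_deriv_le_slope hvd hcc hx (by linarith)
  have h2 : v x < v (x+1) := hvm hx (by simp only [Set.mem_Ici]; linarith) (by linarith)
  have : (0:ℝ) < (v (x+1) - v x) / (x + 1 - x) := by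
    apply div_pos (by linarith); linarith
  linarith

private lemma st19_deriv_lt {v v' : ℝ → ℝ}
    (hvd : ∀ x ∈ Set.Ici (0:ℝ), HasDerivWithinAt v (v' x) (Set.Ici 0) x)
    (hcc : StrictConcaveOn ℝ (Set.Ici 0) v)
    {x y : ℝ} (hx : 0 ≤ x) (hxy : x < y) : v' y < v' x := by
  set u := (x + y) / 2 with hu
  have hxu : x < u := by rw [hu]; linarith
  have huy : u < y := by rw [hu]; linarith
  have hu0 : (0:ℝ) ≤ u := le_trans hx hxu.le
  have hy0 : (0:ℝ) ≤ y := le_trans hx hxy.le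
  have h1 : v' y ≤ (v y - v u) / (y - u) := st19_slope_le_deriv hvd hcc.concaveOn hu0 huy
  have h2 : (v u - v x) / (u - x) ≤ v' x := st19_deriv_le_slope hvd hcc.concaveOn hx hxu
  have h3 : (v y - v u) / (y - u) < (v u - v x) / (u - x) :=
    hcc.slope_anti_adjacent hx hy0 hxu huy
  linarith

private lemma st19_deriv_nonpos_of_max {φ : ℝ → ℝ} {D g : ℝ} (hg : 0 < g)
    (hd : HasDerivWithinAt φ D (Set.Icc 0 g) 0)
    (hle : ∀ t ∈ Set.Ioc 0 g, φ t ≤ φ 0) : D ≤ 0 := by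
  have hset : Set.Icc (0:ℝ) g \ {0} = Set.Ioc 0 g := by
    ext t
    constructor
    · rintro ⟨⟨h1, h2⟩, h3⟩
      exact ⟨lt_of_le_of_ne h1 (fun he => h3 (by simp [he.symm])), h2⟩
    · rintro ⟨h1, h2⟩
      exact ⟨⟨h1.le, h2⟩, by simp [ne_of_gt h1]⟩
  have ht := hasDerivWithinAt_iff_tendsto_slope.1 hd
  rw [hset] at ht
  haveI : (nhdsWithin (0:ℝ) (Set.Ioc 0 g)).NeBot := by
    rw [nhdsWithin_Ioc_eq_nhdsGT hg]; infer_instance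
  refine le_of_tendsto ht ?_
  filter_upwards [self_mem_nhdsWithin] with t htm
  rw [slope_def_field]
  apply div_nonpos_of_nonpos_of_nonneg
  · linarith [hle t htm]
  · linarith [htm.1]

private lemma st19_hasDeriv_shift {v v' : ℝ → ℝ}
    (hvd : ∀ x ∈ Set.Ici (0:ℝ), HasDerivWithinAt v (v' x) (Set.Ici 0) x)
    {c g : ℝ} (hc : 0 ≤ c) :
    HasDerivWithinAt (fun t => v (c + t)) (v' c) (Set.Icc 0 g) 0 := by
  have hinner : HasDerivWithinAt (fun t : ℝ => c + t) 1 (Set.Icc 0 g) 0 :=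
    (hasDerivWithinAt_id 0 _).const_add c
  have houter : HasDerivWithinAt v (v' c) (Set.Ici 0) ((fun t : ℝ => c + t) 0) := by
    simpa using hvd c hc
  have hmaps : Set.MapsTo (fun t : ℝ => c + t) (Set.Icc 0 g) (Set.Ici 0) := by
    intro t ht; simp only [Set.mem_Ici]; have := ht.1; linarith
  have := houter.comp 0 hinner hmaps
  rw [mul_one] at this
  exact this

private lemma st19_hasDeriv_negshift {v v' : ℝ → ℝ}
    (hvd : ∀ x ∈ Set.Ici (0:ℝ), HasDerivWithinAt v (v' x) (Set.Ici 0) x)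
    {c g : ℝ} (hg0 : 0 ≤ g) (hgc : g ≤ c) :
    HasDerivWithinAt (fun t => v (c - t)) (-(v' c)) (Set.Icc 0 g) 0 := by
  have hinner : HasDerivWithinAt (fun t : ℝ => c - t) (-1) (Set.Icc 0 g) 0 := by
    simpa [sub_eq_add_neg] using ((hasDerivWithinAt_id (0:ℝ) (Set.Icc 0 g)).neg.const_add c)
  have hc0 : (0:ℝ) ≤ c := le_trans hg0 hgc
  have houter : HasDerivWithinAt v (v' c) (Set.Ici 0) ((fun t : ℝ => c - t) 0) := by
    simpa using hvd c hc0
  have hmaps : Set.MapsTo (fun t : ℝ => c - t) (Set.Icc 0 g) (Set.Ici 0) := by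
    intro t ht; simp only [Set.mem_Ici]; have := ht.2; linarith
  have := houter.comp 0 hinner hmaps
  rw [mul_neg_one] at this
  exact this

private lemma st19_sum_tail {k : ℕ} (W : ℕ → ℝ) (c : ℕ) (hc : c ≤ k) :
    ∑ l ∈ Finset.univ.filter (fun l : Fin k => c ≤ (l:ℕ)), (W ((l:ℕ)+1) - W (l:ℕ))
      = W k - W c := by
  rw [Finset.sum_filter]
  rw [Fin.sum_univ_eq_sum_range (fun n => if c ≤ n then W (n+1) - W n else 0) k]
  rw [← Finset.sum_filter]
  have hfr : (Finset.range k).filter (fun n => c ≤ n) = Finset.Ico c k := by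
    ext n; simp [Finset.mem_filter, Finset.mem_range, Finset.mem_Ico, and_comm]
  rw [hfr, Finset.sum_Ico_eq_sum_range]
  have h3 : ∑ i ∈ Finset.range (k-c), (W (c+i+1) - W (c+i)) = W (c+(k-c)) - W (c+0) :=
    Finset.sum_range_sub (fun i => W (c+i)) (k-c)
  rw [h3]
  congr 2
  omega

private lemma st19_concave_min {s : Set ℝ} {f g : ℝ → ℝ} (hf : ConcaveOn ℝ s f)
    (hg : ConcaveOn ℝ s g) : ConcaveOn ℝ s (fun x => min (f x) (g x)) := by
  refine ⟨hf.1, fun x hx y hy a b ha hb hab => le_min ?_ ?_⟩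
  · calc a • min (f x) (g x) + b • min (f y) (g y)
        ≤ a • f x + b • f y := by
          gcongr <;> [exact min_le_left _ _; exact min_le_left _ _]
      _ ≤ f (a • x + b • y) := hf.2 hx hy ha hb hab
  · calc a • min (f x) (g x) + b • min (f y) (g y)
        ≤ a • g x + b • g y := by
          gcongr <;> [exact min_le_right _ _; exact min_le_right _ _]
      _ ≤ g (a • x + b • y) := hg.2 hx hy ha hb hab

private lemma st19_concave_affine {s : Set ℝ} (hs : Convex ℝ s) (c d : ℝ) :
    ConcaveOn ℝ s (fun x => c * x + d) := by
  refine ⟨hs, fun x hx y hy a b ha hb hab => le_of_eq ?_⟩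
  simp only [smul_eq_mul]
  linear_combination d * hab

/-- chord lies below a concave function, inside -/
private lemma st19_concave_chord {F : ℝ → ℝ} {s : Set ℝ} (hF : ConcaveOn ℝ s F)
    {q0 q1 x : ℝ} (hq0 : q0 ∈ s) (hq1 : q1 ∈ s) (h01 : q0 < q1) (hx0 : q0 ≤ x) (hx1 : x ≤ q1) :
    F q0 * (q1 - x) + F q1 * (x - q0) ≤ F x * (q1 - q0) := by
  have hd : 0 < q1 - q0 := by linarith
  set t := (x - q0) / (q1 - q0) with htdef
  have ht0 : 0 ≤ t := div_nonneg (by linarith) hd.le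
  have ht1 : t ≤ 1 := by rw [htdef, div_le_one hd]; linarith
  have hsum : (1 - t) + t = 1 := by ring
  have hpt : (1 - t) • q0 + t • q1 = x := by
    simp only [smul_eq_mul]; rw [htdef]; linear_combination (div_mul_cancel₀ (x - q0) hd.ne' : (x - q0) / (q1 - q0) * (q1 - q0) = x - q0)
  have hcc := hF.2 hq0 hq1 (by linarith : (0:ℝ) ≤ 1 - t) ht0 hsum
  rw [hpt] at hcc
  simp only [smul_eq_mul] at hcc
  have htmul : t * (q1 - q0) = x - q0 := by rw [htdef]; exact div_mul_cancel₀ (x - q0) hd.ne'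
  have hexp : ((1-t) * F q0 + t * F q1) * (q1-q0) = F q0 * (q1-x) + F q1 * (x-q0) := by
    linear_combination (F q1 - F q0) * htmul
  rw [← hexp]
  exact mul_le_mul_of_nonneg_right hcc hd.le

/-- concave function lies below the chord line, outside the chord interval -/
private lemma st19_concave_chord_out {F : ℝ → ℝ} {s : Set ℝ} (hF : ConcaveOn ℝ s F)
    {q0 q1 x : ℝ} (hq0 : q0 ∈ s) (hq1 : q1 ∈ s) (hx : x ∈ s) (h01 : q0 < q1)
    (hout : x ≤ q0 ∨ q1 ≤ x) :
    F x * (q1 - q0) ≤ F q0 * (q1 - x) + F q1 * (x - q0) := by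
  rcases hout with hxl | hxr
  · rcases eq_or_lt_of_le hxl with he | hlt
    · subst he; nlinarith []
    · have := st19_concave_chord hF hx hq1 (lt_trans hlt h01) hlt.le (by linarith)
      nlinarith [this]
  · rcases eq_or_lt_of_le hxr with he | hlt
    · rw [← he]; nlinarith []
    · have := st19_concave_chord hF hq0 hx (lt_trans h01 hlt) (by linarith) hlt.le
      nlinarith [this]

set_option maxHeartbeats 3200000 in
/-- (Optimal lottery structure for the average user problem.)
With `h l := w(l/k) − w((l−1)/k)`, price `ρ̄ ≥ 0`, and `p*` the left endpoint of the
affine part of the minimum concave majorant `w*` of `w`, with `p* ≤ (k−1)/k`, any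
maximizer `z*` of `z ↦ ∑ l, h l v(z l) − (ρ̄/k) ∑ l, z l` over nonincreasing nonnegative
vectors satisfies `z*(l*) = z*(l*+1) = … = z*(k)`, where `l*` is the smallest (1-indexed)
`l` with `(l−1)/k ≥ p*`. -/
theorem stmt19 (k : ℕ) (hk : 1 ≤ k)
    (v v' : ℝ → ℝ)
    (hvc : ContinuousOn v (Set.Ici 0))
    (hvd : ∀ x ∈ Set.Ici (0 : ℝ), HasDerivWithinAt v (v' x) (Set.Ici 0) x)
    (hvm : StrictMonoOn v (Set.Ici 0))
    (hvcc : StrictConcaveOn ℝ (Set.Ici 0) v)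
    (hvnn : ∀ x ∈ Set.Ici (0 : ℝ), 0 ≤ v x)
    (w : ℝ → ℝ)
    (hwc : ContinuousOn w (Set.Icc 0 1))
    (hwm : StrictMonoOn w (Set.Icc 0 1))
    (hw0 : w 0 = 0) (hw1 : w 1 = 1)
    (ptilde : ℝ) (hpt : ptilde ∈ Set.Icc (0 : ℝ) 1)
    (hconc : ConcaveOn ℝ (Set.Icc 0 ptilde) w)
    (hconv : ConvexOn ℝ (Set.Icc ptilde 1) w)
    (wstar : ℝ → ℝ)
    (hwsconc : ConcaveOn ℝ (Set.Icc 0 1) wstar)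
    (hdom : ∀ p ∈ Set.Icc (0 : ℝ) 1, w p ≤ wstar p)
    (hminimal : ∀ g : ℝ → ℝ, ConcaveOn ℝ (Set.Icc 0 1) g →
      (∀ p ∈ Set.Icc (0 : ℝ) 1, w p ≤ g p) → ∀ p ∈ Set.Icc (0 : ℝ) 1, wstar p ≤ g p)
    (pstar : ℝ) (hps : pstar ∈ Set.Icc (0 : ℝ) 1)
    (haff : ∃ a b : ℝ, ∀ p ∈ Set.Icc pstar 1, wstar p = a * p + b)
    (hpsmin : ∀ q ∈ Set.Icc (0 : ℝ) 1,
      (∃ a b : ℝ, ∀ p ∈ Set.Icc q 1, wstar p = a * p + b) → pstar ≤ q)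
    (hpk : pstar ≤ ((k : ℝ) - 1) / (k : ℝ))
    (h : Fin k → ℝ)
    (hdef : ∀ l : Fin k, h l = w (((l : ℕ) + 1 : ℝ) / (k : ℝ)) - w (((l : ℕ) : ℝ) / (k : ℝ)))
    (ρ : ℝ) (hρ : 0 ≤ ρ)
    (zstar : Fin k → ℝ) (hzord : Antitone zstar) (hznn : ∀ l, 0 ≤ zstar l)
    (hmax : ∀ z : Fin k → ℝ, Antitone z → (∀ l, 0 ≤ z l) →
      ∑ l, h l * v (z l) - (ρ / (k : ℝ)) * ∑ l, z l ≤
      ∑ l, h l * v (zstar l) - (ρ / (k : ℝ)) * ∑ l, zstar l)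
    (lstar : Fin k)
    (hls : pstar ≤ ((lstar : ℕ) : ℝ) / (k : ℝ))
    (hlsmin : ∀ l : Fin k, pstar ≤ ((l : ℕ) : ℝ) / (k : ℝ) → lstar ≤ l) :
    ∀ l : Fin k, lstar ≤ l → zstar l = zstar lstar := by
  classical
  have hk0 : (0:ℝ) < (k:ℝ) := by exact_mod_cast Nat.pos_of_ne_zero (by omega)
  have hkne : (k:ℝ) ≠ 0 := ne_of_gt hk0
  have hps0 : 0 ≤ pstar := hps.1
  have hps1 : pstar < 1 := by
    have h2 : ((k:ℝ) - 1)/(k:ℝ) < 1 := by rw [div_lt_one hk0]; linarith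
    linarith
  have hwmono := hwm.monotoneOn
  have hwle1 : ∀ x ∈ Set.Icc (0:ℝ) 1, w x ≤ 1 := by
    intro x hx
    have := hwmono hx (⟨zero_le_one, le_refl 1⟩ : (1:ℝ) ∈ Set.Icc (0:ℝ) 1) hx.2
    rwa [hw1] at this
  -- F1 : wstar 1 = 1
  have hW1 : wstar 1 = 1 := by
    have hdom1 : (1:ℝ) ≤ wstar 1 := by
      have := hdom 1 ⟨zero_le_one, le_refl 1⟩; rwa [hw1] at this
    have hgc : ConcaveOn ℝ (Set.Icc 0 1) (fun x => min (wstar x) 1) :=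
      st19_concave_min hwsconc (concaveOn_const 1 (convex_Icc 0 1))
    have hgd : ∀ p ∈ Set.Icc (0:ℝ) 1, w p ≤ min (wstar p) 1 :=
      fun p hp => le_min (hdom p hp) (hwle1 p hp)
    have h2 := hminimal _ hgc hgd 1 ⟨zero_le_one, le_refl 1⟩
    have h3 : wstar 1 ≤ 1 := le_trans h2 (min_le_right _ _)
    linarith
  obtain ⟨a, b, hab⟩ := haff
  -- F2 : wstar pstar = w pstar
  have hWp : wstar pstar = w pstar := by
    have hge : w pstar ≤ wstar pstar := hdom pstar ⟨hps0, hps1.le⟩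
    by_contra hne
    have hlt : w pstar < wstar pstar := lt_of_le_of_ne hge (fun he => hne he.symm)
    rcases eq_or_lt_of_le hps0 with hp0 | hp0
    · -- pstar = 0
      rw [← hp0, hw0] at hlt
      have hcw := Metric.continuousWithinAt_iff.1 (hwc 0 ⟨le_refl 0, zero_le_one⟩)
      have hμ : 0 < wstar 0 / 2 := by linarith
      obtain ⟨η, hη0, hη⟩ := hcw (wstar 0 / 2) hμ
      set η2 := min (η/2) 1 with hη2def
      have hη2 : 0 < η2 := lt_min (by linarith) one_pos
      have hgc : ConcaveOn ℝ (Set.Icc 0 1) (fun x => min (wstar x) ((1/η2)*x + wstar 0/2)) :=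
        st19_concave_min hwsconc (st19_concave_affine (convex_Icc 0 1) (1/η2) (wstar 0/2))
      have hgd : ∀ p ∈ Set.Icc (0:ℝ) 1, w p ≤ min (wstar p) ((1/η2)*p + wstar 0/2) := by
        intro p hp
        refine le_min (hdom p hp) ?_
        rcases le_or_gt p η2 with hc | hc
        · have hd : dist p 0 < η := by
            rw [Real.dist_eq, sub_zero, abs_of_nonneg hp.1]
            calc p ≤ η2 := hc
              _ ≤ η/2 := min_le_left _ _
              _ < η := by linarith
          have := hη hp hd
          rw [Real.dist_eq, hw0, sub_zero] at this
          have h1 : w p < wstar 0/2 := lt_of_abs_lt this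
          have h2 : 0 ≤ (1/η2)*p := mul_nonneg (by positivity) hp.1
          linarith
        · have h1 : w p ≤ 1 := hwle1 p hp
          have h2 : (1:ℝ) ≤ (1/η2)*p := by
            rw [one_div, inv_mul_eq_div, le_div_iff₀ hη2]
            linarith
          linarith
      have h3 := hminimal _ hgc hgd 0 ⟨le_refl 0, zero_le_one⟩
      have h4 : wstar 0 ≤ (1/η2)*0 + wstar 0/2 := le_trans h3 (min_le_right _ _)
      simp at h4
      linarith
    · -- 0 < pstar
      set Wp := wstar pstar with hWpdef
      set wp := w pstar with hwpdef
      set μ := (Wp - wp)/3 with hμdef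
      have hμ : 0 < μ := by rw [hμdef]; linarith
      have hwpnn : 0 ≤ wp := by
        rw [hwpdef, ← hw0]
        exact hwmono ⟨le_refl 0, zero_le_one⟩ ⟨hps0, hps1.le⟩ hps0
      have hWnn : 0 ≤ Wp := le_trans hwpnn hge
      have hcw := Metric.continuousWithinAt_iff.1 (hwc pstar ⟨hps0, hps1.le⟩)
      obtain ⟨η, hη0, hη⟩ := hcw μ hμ
      have h1p : 0 < 1 - pstar := by linarith
      set ε1 := min (min (η/2) ((1-pstar)/2)) (μ*(1-pstar)/(Wp+1)) with hε1def
      have hW1p : (0:ℝ) < Wp + 1 := by linarith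
      have hε1 : 0 < ε1 := by
        refine lt_min (lt_min (by linarith) (by linarith)) ?_
        exact div_pos (mul_pos hμ h1p) hW1p
      have hε1a : ε1 ≤ η/2 := le_trans (min_le_left _ _) (min_le_left _ _)
      have hε1b : ε1 ≤ (1-pstar)/2 := le_trans (min_le_left _ _) (min_le_right _ _)
      have hε1c : ε1 ≤ μ*(1-pstar)/(Wp+1) := min_le_right _ _
      set q1 := pstar + ε1 with hq1def
      have hq1le : q1 ≤ 1 := by rw [hq1def]; linarith
      have hpsq1 : pstar < q1 := by rw [hq1def]; linarith
      set ν := min (μ/(Wp+1)) (1/2) with hνdef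
      have hν0 : 0 < ν := lt_min (by positivity) (by norm_num)
      have hν1 : ν ≤ 1/2 := min_le_right _ _
      have hνc : ν ≤ μ/(Wp+1) := min_le_left _ _
      set q0 := pstar*(1-ν) with hq0def
      have hq00 : 0 ≤ q0 := by rw [hq0def]; nlinarith
      have hq0lt : q0 < pstar := by rw [hq0def]; nlinarith
      have hq01 : q0 < q1 := lt_trans hq0lt hpsq1
      have hq0mem : q0 ∈ Set.Icc (0:ℝ) 1 := ⟨hq00, by linarith⟩
      have hq1mem : q1 ∈ Set.Icc (0:ℝ) 1 := ⟨by linarith, hq1le⟩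
      -- lower bounds on wstar at q0, q1
      have hwsq1 : Wp - μ ≤ wstar q1 := by
        set lam := ε1/(1-pstar) with hlamdef
        have hlam0 : 0 ≤ lam := by positivity
        have hlam1 : lam ≤ 1 := by rw [hlamdef, div_le_one h1p]; linarith
        have hcomb := hwsconc.2 (x := pstar) (y := 1) ⟨hps0, hps1.le⟩ ⟨zero_le_one, le_refl 1⟩
          (by linarith : (0:ℝ) ≤ 1 - lam) hlam0 (by ring)
        have hpteq : (1-lam) • pstar + lam • (1:ℝ) = q1 := by
          simp only [smul_eq_mul, mul_one]
          rw [hlamdef, hq1def]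
          field_simp
          ring
        rw [hpteq] at hcomb
        simp only [smul_eq_mul, mul_one, hW1] at hcomb
        -- hcomb : (1-lam) * wstar pstar + lam ≤ wstar q1  (concave dir: ≥? careful)
        have hlamb : lam * (Wp + 1) ≤ μ := by
          rw [hlamdef, div_mul_eq_mul_div, div_le_iff₀ h1p]
          have h6 : ε1*(Wp+1) ≤ (μ*(1-pstar)/(Wp+1))*(Wp+1) :=
            mul_le_mul_of_nonneg_right hε1c hW1p.le
          have h7 : (μ*(1-pstar)/(Wp+1))*(Wp+1) = μ*(1-pstar) := by
            field_simp
          linarith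
        nlinarith [hcomb, hlam0]
      have hwsq0 : Wp - μ ≤ wstar q0 := by
        have hws0 : 0 ≤ wstar 0 := by
          have := hdom 0 ⟨le_refl 0, zero_le_one⟩
          rwa [hw0] at this
        have hcomb := hwsconc.2 (x := pstar) (y := 0) ⟨hps0, hps1.le⟩ ⟨le_refl 0, zero_le_one⟩
          (by linarith : (0:ℝ) ≤ 1 - ν) hν0.le (by ring)
        have hpteq : (1-ν) • pstar + ν • (0:ℝ) = q0 := by
          simp only [smul_eq_mul, mul_zero, add_zero, hq0def]; ring
        rw [hpteq] at hcomb
        simp only [smul_eq_mul, mul_zero, add_zero] at hcomb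
        have hνb : ν * Wp ≤ μ := by
          have h6 : ν*Wp ≤ (μ/(Wp+1))*Wp := mul_le_mul_of_nonneg_right hνc hWnn
          have h7 : (μ/(Wp+1))*Wp ≤ μ := by
            rw [div_mul_eq_mul_div, div_le_iff₀ hW1p]
            nlinarith [hμ, hWnn]
          linarith
        nlinarith [hcomb, hν0.le, hws0]
      -- the chord line over [q0,q1]
      set s := (wstar q1 - wstar q0)/(q1 - q0) with hsdef
      set c := wstar q0 - s*q0 with hcdef
      have hd01 : 0 < q1 - q0 := by linarith
      have hlform : ∀ x : ℝ, (s*x + c) * (q1 - q0)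
          = wstar q0 * (q1 - x) + wstar q1 * (x - q0) := by
        intro x
        rw [hcdef, hsdef]
        field_simp
        ring
      -- w q1 is small
      have hwq1 : w q1 < wp + μ := by
        have hd : dist q1 pstar < η := by
          rw [Real.dist_eq, hq1def, add_sub_cancel_left, abs_of_nonneg hε1.le]
          linarith
        have := hη hq1mem hd
        rw [Real.dist_eq] at this
        have := lt_of_abs_lt this
        rw [hwpdef]
        linarith
      -- domination
      have hgc : ConcaveOn ℝ (Set.Icc 0 1) (fun x => min (wstar x) (s*x + c)) :=
        st19_concave_min hwsconc (st19_concave_affine (convex_Icc 0 1) s c)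
      have hlbound : ∀ x, q0 ≤ x → x ≤ q1 → Wp - μ ≤ s*x + c := by
        intro x h1 h2
        have h3 : (Wp - μ) * (q1 - q0) ≤ (s*x + c) * (q1 - q0) := by
          rw [hlform x]
          nlinarith [hwsq0, hwsq1]
        exact le_of_mul_le_mul_right h3 hd01
      have hgd : ∀ p ∈ Set.Icc (0:ℝ) 1, w p ≤ min (wstar p) (s*p + c) := by
        intro p hp
        refine le_min (hdom p hp) ?_
        rcases le_or_gt q0 p with hc1 | hc1
        · rcases le_or_gt p q1 with hc2 | hc2
          · -- inside
            have h1 : w p ≤ w q1 := hwmono hp hq1mem hc2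
            have h2 := hlbound p hc1 hc2
            linarith [hwq1]
          · -- right of q1
            have h3 := st19_concave_chord_out hwsconc hq0mem hq1mem hp hq01 (Or.inr hc2.le)
            rw [← hlform p] at h3
            have h4 : wstar p ≤ s*p + c := le_of_mul_le_mul_right h3 hd01
            linarith [hdom p hp]
        · -- left of q0
          have h3 := st19_concave_chord_out hwsconc hq0mem hq1mem hp hq01 (Or.inl hc1.le)
          rw [← hlform p] at h3
          have h4 : wstar p ≤ s*p + c := le_of_mul_le_mul_right h3 hd01
          linarith [hdom p hp]
      have hmin2 := hminimal _ hgc hgd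
      -- wstar = the chord on [q0,q1]
      have haffq : ∀ x, q0 ≤ x → x ≤ q1 → wstar x = s*x + c := by
        intro x h1 h2
        have hxmem : x ∈ Set.Icc (0:ℝ) 1 := ⟨by linarith, by linarith⟩
        have hle2 : wstar x ≤ s*x + c := le_trans (hmin2 x hxmem) (min_le_right _ _)
        have hge2 : s*x + c ≤ wstar x := by
          have h3 := st19_concave_chord hwsconc hq0mem hq1mem hq01 h1 h2
          rw [← hlform x] at h3
          exact le_of_mul_le_mul_right h3 hd01
        linarith
      -- match coefficients with (a,b)
      have e_p : a*pstar + b = s*pstar + c := by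
        rw [← hab pstar ⟨le_refl _, hps1.le⟩, haffq pstar hq0lt.le hpsq1.le]
      have e_q : a*q1 + b = s*q1 + c := by
        rw [← hab q1 ⟨hpsq1.le, hq1le⟩, haffq q1 hq01.le (le_refl _)]
      have has : a = s := by
        have h5 : a * (q1 - pstar) = s * (q1 - pstar) := by linarith [e_p, e_q]
        exact mul_right_cancel₀ (by intro hz; rw [sub_eq_zero] at hz; linarith : q1 - pstar ≠ 0) h5
      have hbc : b = c := by
        rw [has] at e_p
        linarith [e_p]
      have haffq0 : ∀ p ∈ Set.Icc q0 1, wstar p = a*p + b := by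
        intro p hp
        rcases le_or_gt p q1 with hc2 | hc2
        · rw [haffq p hp.1 hc2, has, hbc]
        · exact hab p ⟨by linarith, hp.2⟩
      have := hpsmin q0 hq0mem ⟨a, b, haffq0⟩
      linarith
  have hb1 : a * 1 + b = 1 := by
    rw [← hab 1 ⟨hps1.le, le_refl 1⟩]; exact hW1
  have hbp : a * pstar + b = w pstar := by
    rw [← hab pstar ⟨le_refl _, hps1.le⟩]; exact hWp
  have K1 : ∀ x, pstar ≤ x → x ≤ 1 → w x ≤ a * x + b := by
    intro x h1 h2
    rw [← hab x ⟨h1, h2⟩]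
    exact hdom x ⟨le_trans hps0 h1, h2⟩
  -- KEY : the slope function p ↦ (1 - w p)/(1 - p) is nondecreasing on [pstar, 1)
  have hdnn : ∀ x, pstar ≤ x → x ≤ 1 → 0 ≤ a * x + b - w x := by
    intro x h1 h2; linarith [K1 x h1 h2]
  have keyCC : ∀ p q : ℝ, pstar ≤ p → p < q → q ≤ ptilde →
      (a*p + b - w p) * (1 - q) ≤ (a*q + b - w q) * (1 - p) := by
    intro p q hp hpq hqt
    have hq1 : q ≤ 1 := le_trans hqt hpt.2
    have hpsq : pstar < q := lt_of_le_of_lt hp hpq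
    have hmem0 : pstar ∈ Set.Icc (0:ℝ) ptilde := ⟨hps0, by linarith⟩
    have hmemq : q ∈ Set.Icc (0:ℝ) ptilde := ⟨by linarith, hqt⟩
    have hC := st19_concave_chord hconc hmem0 hmemq hpsq hp hpq.le
    rw [← hbp] at hC
    have e1 : (a*p + b - w p) * (q - pstar) ≤ (a*q + b - w q) * (p - pstar) := by
      linarith [hC]
    have hdq := hdnn q (by linarith) hq1
    have harith : (p - pstar) * (1 - q) ≤ (q - pstar) * (1 - p) := by
      linarith [mul_nonneg (by linarith : (0:ℝ) ≤ q - p) (by linarith : (0:ℝ) ≤ 1 - pstar)]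
    have hD : 0 < q - pstar := by linarith
    have h1q : 0 ≤ 1 - q := by linarith
    have hX1 := mul_le_mul_of_nonneg_right e1 h1q
    have hX2 := mul_le_mul_of_nonneg_left harith hdq
    have h3 : (a*p + b - w p) * (1 - q) * (q - pstar) ≤ (a*q + b - w q) * (1 - p) * (q - pstar) := by
      linarith [hX1, hX2]
    exact le_of_mul_le_mul_right h3 hD
  have keyVV : ∀ p q : ℝ, ptilde ≤ p → p < q → q < 1 →
      (a*p + b - w p) * (1 - q) ≤ (a*q + b - w q) * (1 - p) := by
    intro p q htp hpq hq1
    have hmemp : p ∈ Set.Icc ptilde 1 := ⟨htp, by linarith⟩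
    have hmem1 : (1:ℝ) ∈ Set.Icc ptilde 1 := ⟨hpt.2, le_refl 1⟩
    have hC := st19_concave_chord hconv.neg hmemp hmem1 (by linarith) hpq.le hq1.le
    simp only [Pi.neg_apply] at hC
    rw [hw1] at hC
    have hb' : b = 1 - a := by linarith
    rw [hb']
    linarith [hC]
  have key : ∀ p q : ℝ, pstar ≤ p → p < q → q < 1 →
      (1 - w p) * (1 - q) ≤ (1 - w q) * (1 - p) := by
    intro p q hp hpq hq1
    have hδ : (a*p + b - w p) * (1 - q) ≤ (a*q + b - w q) * (1 - p) := by
      rcases le_or_gt q ptilde with hc1 | hc1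
      · exact keyCC p q hp hpq hc1
      rcases le_or_gt ptilde p with hc2 | hc2
      · exact keyVV p q hc2 hpq hq1
      have hA := keyCC p ptilde hp hc2 (le_refl _)
      have hB := keyVV ptilde q (le_refl _) hc1 hq1
      have ht1 : (0:ℝ) < 1 - ptilde := by linarith
      have h1q : (0:ℝ) ≤ 1 - q := by linarith
      have h1p : (0:ℝ) ≤ 1 - p := by linarith [hpt.2]
      have hX1 := mul_le_mul_of_nonneg_right hA h1q
      have hX2 := mul_le_mul_of_nonneg_right hB h1p
      have hchain : ((a*p + b - w p) * (1 - q)) * (1 - ptilde)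
          ≤ ((a*q + b - w q) * (1 - p)) * (1 - ptilde) := by linarith [hX1, hX2]
      exact le_of_mul_le_mul_right hchain ht1
    have hb' : b = 1 - a := by linarith
    rw [hb'] at hδ
    linarith [hδ]
  -- grid sums
  have hgrid : ∀ n : ℕ, n ≤ k → ((n:ℝ)/(k:ℝ)) ∈ Set.Icc (0:ℝ) 1 := by
    intro n hn
    constructor
    · positivity
    · rw [div_le_one hk0]; exact_mod_cast hn
  have hsumh : ∀ c : ℕ, c ≤ k →
      ∑ l ∈ Finset.univ.filter (fun l : Fin k => c ≤ (l:ℕ)), h l = 1 - w ((c:ℝ)/(k:ℝ)) := by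
    intro c hc
    calc ∑ l ∈ Finset.univ.filter (fun l : Fin k => c ≤ (l:ℕ)), h l
        = ∑ l ∈ Finset.univ.filter (fun l : Fin k => c ≤ (l:ℕ)),
            ((fun n : ℕ => w ((n:ℝ)/(k:ℝ))) ((l:ℕ)+1) - (fun n : ℕ => w ((n:ℝ)/(k:ℝ))) (l:ℕ)) := by
          apply Finset.sum_congr rfl
          intro l _
          simp only []
          rw [hdef l]
          push_cast
          ring_nf
      _ = (fun n : ℕ => w ((n:ℝ)/(k:ℝ))) k - (fun n : ℕ => w ((n:ℝ)/(k:ℝ))) c :=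
          st19_sum_tail (fun n : ℕ => w ((n:ℝ)/(k:ℝ))) c hc
      _ = 1 - w ((c:ℝ)/(k:ℝ)) := by
          show w ((k:ℝ)/(k:ℝ)) - w ((c:ℝ)/(k:ℝ)) = _
          rw [div_self hkne, hw1]
  have hcard1 : ∀ c : ℕ, c ≤ k →
      ∑ l ∈ Finset.univ.filter (fun l : Fin k => c ≤ (l:ℕ)), (1:ℝ) = (k:ℝ) - (c:ℝ) := by
    intro c hc
    have h1 : ∑ l ∈ Finset.univ.filter (fun l : Fin k => c ≤ (l:ℕ)), (1:ℝ)
        = ∑ l ∈ Finset.univ.filter (fun l : Fin k => c ≤ (l:ℕ)),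
            ((fun n : ℕ => (n:ℝ)) ((l:ℕ)+1) - (fun n : ℕ => (n:ℝ)) (l:ℕ)) := by
      apply Finset.sum_congr rfl; intro l _; simp only []; push_cast; ring
    rw [h1, st19_sum_tail (fun n : ℕ => (n:ℝ)) c hc]
  have hwmono2 : ∀ n1 n2 : ℕ, n1 ≤ n2 → n2 ≤ k → w ((n1:ℝ)/(k:ℝ)) ≤ w ((n2:ℝ)/(k:ℝ)) := by
    intro n1 n2 h12 h2k
    refine hwmono (hgrid n1 (le_trans h12 h2k)) (hgrid n2 h2k) ?_
    have h12' : (n1:ℝ) ≤ (n2:ℝ) := by exact_mod_cast h12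
    gcongr
  have hwlt2 : ∀ n1 n2 : ℕ, n1 < n2 → n2 ≤ k → w ((n1:ℝ)/(k:ℝ)) < w ((n2:ℝ)/(k:ℝ)) := by
    intro n1 n2 h12 h2k
    refine hwm (hgrid n1 (le_trans h12.le h2k)) (hgrid n2 h2k) ?_
    rw [div_lt_div_iff_of_pos_right hk0]
    exact_mod_cast h12
  have hhnn : ∀ l : Fin k, 0 ≤ h l := by
    intro l
    rw [hdef l, sub_nonneg]
    have := hwmono2 (l:ℕ) ((l:ℕ)+1) (by omega) l.isLt
    push_cast at this
    exact this
  -- no drop after lstar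
  have hnodrop : ∀ (m : Fin k) (hm1 : (m:ℕ)+1 < k), lstar ≤ m →
      zstar ⟨(m:ℕ)+1, hm1⟩ < zstar m → False := by
    intro m hm1 hlm hdrop
    set m' : Fin k := ⟨(m:ℕ)+1, hm1⟩ with hm'def
    have hgap0 : 0 < zstar m - zstar m' := by linarith [hdrop]
    set gap : ℝ := zstar m - zstar m' with hgapdef
    have hgap : 0 < gap := hgap0
    have hm'le : ∀ l : Fin k, (m:ℕ)+1 ≤ (l:ℕ) → m' ≤ l := by
      intro l hl; rw [Fin.le_def]; simpa [hm'def] using hl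
    have hXpos : 0 < v' (zstar m') := st19_deriv_pos hvd hvcc.concaveOn hvm (hznn m')
    have hobj : ∀ z : Fin k → ℝ,
        (∑ l, h l * v (z l) - (ρ/(k:ℝ)) * ∑ l, z l)
        = ∑ l ∈ Finset.univ.filter (fun l : Fin k => (m:ℕ)+1 ≤ (l:ℕ)),
            (h l * v (z l) - (ρ/(k:ℝ)) * z l)
          + ∑ l ∈ Finset.univ.filter (fun l : Fin k => ¬((m:ℕ)+1 ≤ (l:ℕ))),
            (h l * v (z l) - (ρ/(k:ℝ)) * z l) := by
      intro z
      rw [Finset.mul_sum, ← Finset.sum_sub_distrib,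
        Finset.sum_filter_add_sum_filter_not]
    -- Step A : raising the whole tail
    have hA : (1 - w ((((m:ℕ):ℝ)+1)/(k:ℝ))) * v' (zstar m')
        ≤ (ρ/(k:ℝ)) * ((k:ℝ) - (((m:ℕ):ℝ)+1)) := by
      have hphi : ∀ t ∈ Set.Ioc (0:ℝ) gap,
          (fun s : ℝ => ∑ l ∈ Finset.univ.filter (fun l : Fin k => (m:ℕ)+1 ≤ (l:ℕ)),
            (h l * v (zstar l + s) - (ρ/(k:ℝ)) * (zstar l + s))) t
          ≤ (fun s : ℝ => ∑ l ∈ Finset.univ.filter (fun l : Fin k => (m:ℕ)+1 ≤ (l:ℕ)),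
            (h l * v (zstar l + s) - (ρ/(k:ℝ)) * (zstar l + s))) 0 := by
        intro t ht
        simp only []
        set zA : Fin k → ℝ := fun l => if (m:ℕ)+1 ≤ (l:ℕ) then zstar l + t else zstar l with hzA
        have hanti : Antitone zA := by
          intro x y hxy
          simp only [hzA]
          by_cases hx : (m:ℕ)+1 ≤ (x:ℕ)
          · have hy : (m:ℕ)+1 ≤ (y:ℕ) := le_trans hx hxy
            simp only [if_pos hx, if_pos hy]
            have := hzord hxy; linarith
          · by_cases hy : (m:ℕ)+1 ≤ (y:ℕ)
            · simp only [if_neg hx, if_pos hy]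
              have h1 : zstar y ≤ zstar m' := hzord (hm'le y hy)
              have h2 : zstar m ≤ zstar x := hzord (show x ≤ m by rw [Fin.le_def]; omega)
              have h3 := ht.2
              rw [hgapdef] at h3
              linarith
            · simp only [if_neg hx, if_neg hy]; exact hzord hxy
        have hnn : ∀ l, 0 ≤ zA l := by
          intro l; simp only [hzA]
          by_cases hc : (m:ℕ)+1 ≤ (l:ℕ)
          · simp only [if_pos hc]; linarith [hznn l, ht.1.le]
          · simp only [if_neg hc]; exact hznn l
        have hm2 := hmax zA hanti hnn
        rw [hobj zA, hobj zstar] at hm2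
        have e1 : ∑ l ∈ Finset.univ.filter (fun l : Fin k => (m:ℕ)+1 ≤ (l:ℕ)),
              (h l * v (zA l) - (ρ/(k:ℝ)) * zA l)
            = ∑ l ∈ Finset.univ.filter (fun l : Fin k => (m:ℕ)+1 ≤ (l:ℕ)),
              (h l * v (zstar l + t) - (ρ/(k:ℝ)) * (zstar l + t)) := by
          apply Finset.sum_congr rfl; intro l hl
          have hc := (Finset.mem_filter.1 hl).2
          simp only [hzA, if_pos hc]
        have e2 : ∑ l ∈ Finset.univ.filter (fun l : Fin k => ¬((m:ℕ)+1 ≤ (l:ℕ))),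
              (h l * v (zA l) - (ρ/(k:ℝ)) * zA l)
            = ∑ l ∈ Finset.univ.filter (fun l : Fin k => ¬((m:ℕ)+1 ≤ (l:ℕ))),
              (h l * v (zstar l) - (ρ/(k:ℝ)) * zstar l) := by
          apply Finset.sum_congr rfl; intro l hl
          have hc := (Finset.mem_filter.1 hl).2
          simp only [hzA, if_neg hc]
        rw [e1, e2] at hm2
        have e3 : ∑ l ∈ Finset.univ.filter (fun l : Fin k => (m:ℕ)+1 ≤ (l:ℕ)),
              (h l * v (zstar l + 0) - (ρ/(k:ℝ)) * (zstar l + 0))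
            = ∑ l ∈ Finset.univ.filter (fun l : Fin k => (m:ℕ)+1 ≤ (l:ℕ)),
              (h l * v (zstar l) - (ρ/(k:ℝ)) * zstar l) := by
          apply Finset.sum_congr rfl; intro l _; norm_num
        rw [e3]
        linarith [hm2]
      have hder : HasDerivWithinAt
          (fun s : ℝ => ∑ l ∈ Finset.univ.filter (fun l : Fin k => (m:ℕ)+1 ≤ (l:ℕ)),
            (h l * v (zstar l + s) - (ρ/(k:ℝ)) * (zstar l + s)))
          (∑ l ∈ Finset.univ.filter (fun l : Fin k => (m:ℕ)+1 ≤ (l:ℕ)),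
            (h l * v' (zstar l) - (ρ/(k:ℝ))))
          (Set.Icc 0 gap) 0 := by
        apply HasDerivWithinAt.fun_sum
        intro l _
        have h1 := (st19_hasDeriv_shift hvd (hznn l) (g := gap)).const_mul (h l)
        have h2 : HasDerivWithinAt (fun s : ℝ => (ρ/(k:ℝ)) * (zstar l + s)) (ρ/(k:ℝ))
            (Set.Icc 0 gap) 0 := by
          have := ((hasDerivWithinAt_id (0:ℝ) (Set.Icc (0:ℝ) gap)).const_add (zstar l)).const_mul (ρ/(k:ℝ))
          simpa using this
        have h3 := h1.sub h2
        exact h3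
      have hD := st19_deriv_nonpos_of_max hgap hder hphi
      rw [Finset.sum_sub_distrib] at hD
      have hcT : ∑ _l ∈ Finset.univ.filter (fun l : Fin k => (m:ℕ)+1 ≤ (l:ℕ)), (ρ/(k:ℝ))
          = (ρ/(k:ℝ)) * ((k:ℝ) - (((m:ℕ):ℝ)+1)) := by
        have h1 : ∑ _l ∈ Finset.univ.filter (fun l : Fin k => (m:ℕ)+1 ≤ (l:ℕ)), (ρ/(k:ℝ))
            = (ρ/(k:ℝ)) * ∑ _l ∈ Finset.univ.filter (fun l : Fin k => (m:ℕ)+1 ≤ (l:ℕ)), (1:ℝ) := by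
          rw [Finset.mul_sum]; simp
        rw [h1, hcard1 ((m:ℕ)+1) hm1.le]
        push_cast
        ring
      rw [hcT] at hD
      have hlow : (∑ l ∈ Finset.univ.filter (fun l : Fin k => (m:ℕ)+1 ≤ (l:ℕ)), h l) * v' (zstar m')
          ≤ ∑ l ∈ Finset.univ.filter (fun l : Fin k => (m:ℕ)+1 ≤ (l:ℕ)), h l * v' (zstar l) := by
        rw [Finset.sum_mul]
        apply Finset.sum_le_sum
        intro l hl
        have hl' := (Finset.mem_filter.1 hl).2
        have hzle : zstar l ≤ zstar m' := hzord (hm'le l hl')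
        have hv2 : v' (zstar m') ≤ v' (zstar l) := by
          rcases eq_or_lt_of_le hzle with he | hlt2
          · rw [he]
          · exact (st19_deriv_lt hvd hvcc (hznn l) hlt2).le
        exact mul_le_mul_of_nonneg_left hv2 (hhnn l)
      have hsT : ∑ l ∈ Finset.univ.filter (fun l : Fin k => (m:ℕ)+1 ≤ (l:ℕ)), h l
          = 1 - w ((((m:ℕ):ℝ)+1)/(k:ℝ)) := by
        rw [hsumh ((m:ℕ)+1) hm1.le]
        push_cast
        ring_nf
      rw [hsT] at hlow
      linarith [hD, hlow]
    -- Step B : lowering z at m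
    have hgapz : gap ≤ zstar m := by
      rw [hgapdef]; linarith [hznn m']
    have hFOC : ρ/(k:ℝ) ≤ h m * v' (zstar m) := by
      have hphiB : ∀ t ∈ Set.Ioc (0:ℝ) gap,
          (fun s : ℝ => h m * v (zstar m - s) + (ρ/(k:ℝ)) * s) t
          ≤ (fun s : ℝ => h m * v (zstar m - s) + (ρ/(k:ℝ)) * s) 0 := by
        intro t ht
        simp only []
        set zB : Fin k → ℝ := Function.update zstar m (zstar m - t) with hzB
        have hanti : Antitone zB := by
          intro x y hxy
          simp only [hzB]
          by_cases hy : y = m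
          · rw [hy, Function.update_self]
            by_cases hx : x = m
            · rw [hx, Function.update_self]
            · rw [Function.update_of_ne hx]
              have hxm : x ≤ m := hy ▸ hxy
              have h1 : zstar m ≤ zstar x := hzord hxm
              linarith [ht.1.le]
          · rw [Function.update_of_ne hy]
            by_cases hx : x = m
            · rw [hx, Function.update_self]
              have hmy : m' ≤ y := hm'le y (by
                have h4 : (m:ℕ) ≤ (y:ℕ) := hx ▸ hxy
                have h5 : (m:ℕ) ≠ (y:ℕ) := fun he => hy (Fin.ext he.symm)
                omega)
              have h1 : zstar y ≤ zstar m' := hzord hmy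
              have h3 := ht.2
              rw [hgapdef] at h3
              linarith
            · rw [Function.update_of_ne hx]
              exact hzord hxy
        have hnn : ∀ l, 0 ≤ zB l := by
          intro l
          simp only [hzB]
          by_cases hc : l = m
          · subst hc
            rw [Function.update_self]
            have h3 := ht.2
            rw [hgapdef] at h3
            linarith [hznn m']
          · rw [Function.update_of_ne hc]
            exact hznn l
        have hm2 := hmax zB hanti hnn
        have e1 : ∑ l, h l * v (zB l)
            = h m * v (zstar m - t) + ∑ l ∈ Finset.univ.erase m, h l * v (zstar l) := by
          rw [← Finset.sum_erase_add _ _ (Finset.mem_univ m)]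
          rw [add_comm]
          congr 1
          · simp [hzB]
          · apply Finset.sum_congr rfl
            intro l hl
            rw [hzB, Function.update_of_ne (Finset.ne_of_mem_erase hl)]
        have e2 : ∑ l, zB l = (zstar m - t) + ∑ l ∈ Finset.univ.erase m, zstar l := by
          rw [← Finset.sum_erase_add _ _ (Finset.mem_univ m)]
          rw [add_comm]
          congr 1
          · simp [hzB]
          · apply Finset.sum_congr rfl
            intro l hl
            rw [hzB, Function.update_of_ne (Finset.ne_of_mem_erase hl)]
        have e3 : ∑ l, h l * v (zstar l)
            = h m * v (zstar m) + ∑ l ∈ Finset.univ.erase m, h l * v (zstar l) := by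
          rw [← Finset.sum_erase_add _ _ (Finset.mem_univ m), add_comm]
        have e4 : ∑ l, zstar l = zstar m + ∑ l ∈ Finset.univ.erase m, zstar l := by
          rw [← Finset.sum_erase_add _ _ (Finset.mem_univ m), add_comm]
        rw [e1, e2, e3, e4] at hm2
        have expand : (ρ/(k:ℝ)) * ((zstar m - t) + ∑ l ∈ Finset.univ.erase m, zstar l)
            = (ρ/(k:ℝ)) * (zstar m - t) + (ρ/(k:ℝ)) * ∑ l ∈ Finset.univ.erase m, zstar l := by ring
        have expand2 : (ρ/(k:ℝ)) * (zstar m + ∑ l ∈ Finset.univ.erase m, zstar l)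
            = (ρ/(k:ℝ)) * zstar m + (ρ/(k:ℝ)) * ∑ l ∈ Finset.univ.erase m, zstar l := by ring
        rw [expand, expand2] at hm2
        have : h m * v (zstar m - t) + (ρ/(k:ℝ)) * t ≤ h m * v (zstar m) := by nlinarith [hm2]
        simpa using this
      have hderB : HasDerivWithinAt (fun s : ℝ => h m * v (zstar m - s) + (ρ/(k:ℝ)) * s)
          (h m * (-(v' (zstar m))) + (ρ/(k:ℝ))) (Set.Icc 0 gap) 0 := by
        have h1 := (st19_hasDeriv_negshift hvd hgap.le hgapz).const_mul (h m)
        have h2 : HasDerivWithinAt (fun s : ℝ => (ρ/(k:ℝ)) * s) (ρ/(k:ℝ)) (Set.Icc 0 gap) 0 := by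
          simpa using (hasDerivWithinAt_id (0:ℝ) (Set.Icc (0:ℝ) gap)).const_mul (ρ/(k:ℝ))
        exact h1.add h2
      have hDB := st19_deriv_nonpos_of_max hgap hderB hphiB
      nlinarith [hDB]
    have hmpos : 0 < h m := by
      rw [hdef m]
      have := hwlt2 (m:ℕ) ((m:ℕ)+1) (Nat.lt_succ_self _) hm1.le
      push_cast at this
      linarith
    have hvlt : v' (zstar m) < v' (zstar m') := st19_deriv_lt hvd hvcc (hznn m') hdrop
    have hB : ρ/(k:ℝ) < h m * v' (zstar m') :=
      lt_of_le_of_lt hFOC (mul_lt_mul_of_pos_left hvlt hmpos)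
    -- final contradiction
    have hple : pstar ≤ ((m:ℕ):ℝ)/(k:ℝ) := by
      refine le_trans hls ?_
      have hcast : ((lstar:ℕ):ℝ) ≤ ((m:ℕ):ℝ) := by exact_mod_cast hlm
      rw [div_le_div_iff₀ hk0 hk0]
      exact mul_le_mul_of_nonneg_right hcast hk0.le
    have hpq : ((m:ℕ):ℝ)/(k:ℝ) < (((m:ℕ):ℝ)+1)/(k:ℝ) := by
      rw [div_lt_div_iff_of_pos_right hk0]; linarith
    have hq1 : (((m:ℕ):ℝ)+1)/(k:ℝ) < 1 := by
      rw [div_lt_one hk0]; exact_mod_cast hm1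
    have hkey := key (((m:ℕ):ℝ)/(k:ℝ)) ((((m:ℕ):ℝ)+1)/(k:ℝ)) hple hpq hq1
    have hq' : 1 - (((m:ℕ):ℝ)+1)/(k:ℝ) = ((k:ℝ) - (((m:ℕ):ℝ)+1))/(k:ℝ) := by
      field_simp
    have hp' : 1 - ((m:ℕ):ℝ)/(k:ℝ) = ((k:ℝ) - ((m:ℕ):ℝ))/(k:ℝ) := by
      field_simp
    rw [hq', hp'] at hkey
    have hkey2 : (1 - w (((m:ℕ):ℝ)/(k:ℝ))) * ((k:ℝ) - (((m:ℕ):ℝ)+1))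
        ≤ (1 - w ((((m:ℕ):ℝ)+1)/(k:ℝ))) * ((k:ℝ) - ((m:ℕ):ℝ)) := by
      have h3 := mul_le_mul_of_nonneg_right hkey hk0.le
      have e5 : (1 - w (((m:ℕ):ℝ)/(k:ℝ))) * (((k:ℝ) - (((m:ℕ):ℝ)+1))/(k:ℝ)) * (k:ℝ)
          = (1 - w (((m:ℕ):ℝ)/(k:ℝ))) * ((k:ℝ) - (((m:ℕ):ℝ)+1)) := by
        field_simp
      have e6 : (1 - w ((((m:ℕ):ℝ)+1)/(k:ℝ))) * (((k:ℝ) - ((m:ℕ):ℝ))/(k:ℝ)) * (k:ℝ)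
          = (1 - w ((((m:ℕ):ℝ)+1)/(k:ℝ))) * ((k:ℝ) - ((m:ℕ):ℝ)) := by
        field_simp
      rw [e5, e6] at h3
      exact h3
    have hN : (0:ℝ) < (k:ℝ) - (((m:ℕ):ℝ)+1) := by
      have : ((m:ℕ):ℝ)+1 < (k:ℝ) := by exact_mod_cast hm1
      linarith
    have hBm : h m = w ((((m:ℕ):ℝ)+1)/(k:ℝ)) - w (((m:ℕ):ℝ)/(k:ℝ)) := hdef m
    rw [hBm] at hB
    have hstep1 := mul_lt_mul_of_pos_right hB hN
    have hkey3 := mul_le_mul_of_nonneg_right hkey2 hXpos.le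
    linarith [hA, hstep1, hkey3]
  -- conclusion by induction
  have hstep : ∀ (m : Fin k) (hm1 : (m:ℕ)+1 < k), lstar ≤ m →
      zstar ⟨(m:ℕ)+1, hm1⟩ = zstar m := by
    intro m hm1 hlm
    have hle : zstar ⟨(m:ℕ)+1, hm1⟩ ≤ zstar m := hzord (by rw [Fin.le_def]; simp)
    rcases eq_or_lt_of_le hle with he | hlt
    · exact he
    · exact absurd hlt (fun hlt => hnodrop m hm1 hlm hlt)
  intro l hl
  have hlln : (lstar:ℕ) ≤ (l:ℕ) := hl
  obtain ⟨n, hn⟩ : ∃ n, (l:ℕ) = (lstar:ℕ) + n := ⟨(l:ℕ) - (lstar:ℕ), by omega⟩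
  have H : ∀ n (hnk : (lstar:ℕ) + n < k), zstar ⟨(lstar:ℕ) + n, hnk⟩ = zstar lstar := by
    intro n
    induction n with
    | zero =>
      intro hnk
      have he : (⟨(lstar:ℕ)+0, hnk⟩ : Fin k) = lstar := by apply Fin.ext; simp
      rw [he]
    | succ n ih =>
      intro hnk
      have hn' : (lstar:ℕ) + n < k := by omega
      have he : (⟨(lstar:ℕ)+(n+1), hnk⟩ : Fin k)
          = ⟨((⟨(lstar:ℕ)+n, hn'⟩ : Fin k) : ℕ)+1, by simpa [Nat.add_assoc] using hnk⟩ := by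
        apply Fin.ext; simp; omega
      rw [he, hstep ⟨(lstar:ℕ)+n, hn'⟩ _ (by rw [Fin.le_def]; simp), ih hn']
  have hl2 : l = ⟨(lstar:ℕ) + n, by omega⟩ := by apply Fin.ext; simp [hn]
  rw [hl2]
  exact H n (by omega)
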